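/- Weyl's inequality for singular values: for any square real matrices S, E of the same size and any index i, |σ_i(S + E) − σ_i(S)| ≤ ‖E‖₂, where σ_i denotes the i-th largest singular value and ‖·‖₂ the spectral norm. -/

import Mathlib

open Matrix BigOperators

/-- The nonincreasing rearrangement of the square roots of the eigenvalues of
`Mᴴ * M`: the `i`-th largest singular value of a real square matrix `M`. -/
noncomputable def singVal {n : ℕ} (M : Matrix (Fin n) (Fin n) ℝ) (i : Fin n) : ℝ :=
  Real.sqrt ((Matrix.isHermitian_conjTranspose_mul_self M).eigenvalues
    (Tuple.sort (fun j =>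
      -Real.sqrt ((Matrix.isHermitian_conjTranspose_mul_self M).eigenvalues j)) i))

namespace WeylAux

variable {n : ℕ}

noncomputable def toE2 (v : Fin n → ℝ) : EuclideanSpace ℝ (Fin n) := WithLp.toLp 2 v

lemma inner_toE2 (v w : Fin n → ℝ) : inner ℝ (toE2 v) (toE2 w) = v ⬝ᵥ w := by
  simp [toE2, PiLp.inner_apply, dotProduct, RCLike.inner_apply, mul_comm]

lemma norm_sq_form (M : Matrix (Fin n) (Fin n) ℝ) (x : EuclideanSpace ℝ (Fin n)) :
    ‖toE2 (M *ᵥ x)‖^2 = inner ℝ x (toE2 ((Mᴴ * M) *ᵥ x)) := by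
  rw [← real_inner_self_eq_norm_sq]
  show inner ℝ (toE2 (M *ᵥ x)) (toE2 (M *ᵥ x))
      = inner ℝ (toE2 (x : Fin n → ℝ)) (toE2 ((Mᴴ * M) *ᵥ x))
  rw [inner_toE2, inner_toE2, ← mulVec_mulVec, dotProduct_mulVec x, ← vecMul_transpose]
  have : Mᴴ = Mᵀ := by ext i j; simp [conjTranspose_apply]
  rw [this]

lemma qform (M : Matrix (Fin n) (Fin n) ℝ) (x : EuclideanSpace ℝ (Fin n)) :
    inner ℝ x (toE2 ((Mᴴ * M) *ᵥ x)) =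
      ∑ j, (isHermitian_conjTranspose_mul_self M).eigenvalues j *
        ((isHermitian_conjTranspose_mul_self M).eigenvectorBasis.repr x j)^2 := by
  set hA := isHermitian_conjTranspose_mul_self M
  set u := hA.eigenvectorBasis with hu
  set c : Fin n → ℝ := fun j => u.repr x j with hc
  have hA2 : toE2 ((Mᴴ * M) *ᵥ x) = ∑ j, (c j * hA.eigenvalues j) • u j := by
    have hx : (x : Fin n → ℝ) = ∑ j, c j • ⇑(u j) := by
      conv_lhs => rw [← u.sum_repr x]
      rw [WithLp.ofLp_sum]; rfl
    show toE2 ((Mᴴ * M) *ᵥ (x : Fin n → ℝ)) = _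
    rw [hx]
    have : (Mᴴ * M) *ᵥ (∑ j, c j • ⇑(u j)) = ∑ j, c j • ((Mᴴ * M) *ᵥ ⇑(u j)) := by
      have := map_sum ((Mᴴ * M).mulVecLin) (fun j => c j • ⇑(u j)) Finset.univ
      simp only [mulVecLin_apply] at this
      rw [this]
      exact Finset.sum_congr rfl fun j _ => mulVec_smul _ _ _
    show toE2 _ = _
    rw [this]
    have h2 : ∀ j, c j • ((Mᴴ * M) *ᵥ ⇑(u j)) = (c j * hA.eigenvalues j) • ⇑(u j) := by
      intro j
      rw [hA.mulVec_eigenvectorBasis j, smul_smul]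
    simp only [h2]
    rw [toE2, WithLp.toLp_sum]; rfl
  rw [hA2, inner_sum]
  refine Finset.sum_congr rfl fun j _ => ?_
  rw [real_inner_smul_right, real_inner_comm]
  have : inner ℝ (u j) x = c j := (u.repr_apply_apply x j).symm
  rw [this]; ring

lemma parseval (u : OrthonormalBasis (Fin n) ℝ (EuclideanSpace ℝ (Fin n)))
    (x : EuclideanSpace ℝ (Fin n)) : ‖x‖^2 = ∑ j, (u.repr x j)^2 := by
  rw [← u.repr.norm_map x, EuclideanSpace.norm_eq, Real.sq_sqrt (by positivity)]
  exact Finset.sum_congr rfl fun j _ => by rw [Real.norm_eq_abs, sq_abs]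

lemma qform_le (M : Matrix (Fin n) (Fin n) ℝ) (x : EuclideanSpace ℝ (Fin n)) (B : ℝ)
    (hB : 0 ≤ B)
    (h : ∀ k, (isHermitian_conjTranspose_mul_self M).eigenvectorBasis.repr x k ≠ 0 →
      (isHermitian_conjTranspose_mul_self M).eigenvalues k ≤ B) :
    ‖toE2 (M *ᵥ x)‖^2 ≤ B * ‖x‖^2 := by
  rw [norm_sq_form, qform, parseval (isHermitian_conjTranspose_mul_self M).eigenvectorBasis,
    Finset.mul_sum]
  refine Finset.sum_le_sum fun k _ => ?_
  by_cases hk : (isHermitian_conjTranspose_mul_self M).eigenvectorBasis.repr x k = 0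
  · rw [hk]; simp
  · exact mul_le_mul_of_nonneg_right (h k hk) (sq_nonneg _)

lemma qform_ge (M : Matrix (Fin n) (Fin n) ℝ) (x : EuclideanSpace ℝ (Fin n)) (B : ℝ)
    (h : ∀ k, (isHermitian_conjTranspose_mul_self M).eigenvectorBasis.repr x k ≠ 0 →
      B ≤ (isHermitian_conjTranspose_mul_self M).eigenvalues k) :
    B * ‖x‖^2 ≤ ‖toE2 (M *ᵥ x)‖^2 := by
  rw [norm_sq_form, qform, parseval (isHermitian_conjTranspose_mul_self M).eigenvectorBasis,
    Finset.mul_sum]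
  refine Finset.sum_le_sum fun k _ => ?_
  by_cases hk : (isHermitian_conjTranspose_mul_self M).eigenvectorBasis.repr x k = 0
  · rw [hk]; simp
  · exact mul_le_mul_of_nonneg_right (h k hk) (sq_nonneg _)

lemma repr_zero_of_span (u : OrthonormalBasis (Fin n) ℝ (EuclideanSpace ℝ (Fin n)))
    {s : Set (Fin n)} {x : EuclideanSpace ℝ (Fin n)}
    (hx : x ∈ Submodule.span ℝ (⇑u '' s)) {k : Fin n} (hk : k ∉ s) : u.repr x k = 0 := by
  have hle : Submodule.span ℝ (⇑u '' s) ≤ LinearMap.ker ((innerSL ℝ (u k)).toLinearMap) := by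
    rw [Submodule.span_le]
    rintro y ⟨m, hm, rfl⟩
    have hkm : k ≠ m := fun h => hk (h ▸ hm)
    simpa [LinearMap.mem_ker] using u.orthonormal.2 hkm
  have : inner ℝ (u k) x = 0 := hle hx
  rw [u.repr_apply_apply, this]

lemma singVal_nonneg (M : Matrix (Fin n) (Fin n) ℝ) (j : Fin n) : 0 ≤ singVal M j :=
  Real.sqrt_nonneg _

lemma singVal_antitone (M : Matrix (Fin n) (Fin n) ℝ) : Antitone (singVal M) := by
  intro a b hab
  have h := Tuple.monotone_sort
    (fun j => -Real.sqrt ((isHermitian_conjTranspose_mul_self M).eigenvalues j)) hab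
  simp only [Function.comp_apply] at h
  unfold singVal
  linarith

lemma sq_singVal (M : Matrix (Fin n) (Fin n) ℝ) (j : Fin n) :
    (singVal M j)^2 = (isHermitian_conjTranspose_mul_self M).eigenvalues
      (Tuple.sort (fun k =>
        -Real.sqrt ((isHermitian_conjTranspose_mul_self M).eigenvalues k)) j) :=
  Real.sq_sqrt ((posSemidef_conjTranspose_mul_self M).eigenvalues_nonneg _)

lemma eigvals_congr {A B : Matrix (Fin n) (Fin n) ℝ} (hA : A.IsHermitian)
    (hB : B.IsHermitian) (h : A = B) : hA.eigenvalues = hB.eigenvalues := by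
  subst h; rfl

lemma singVal_congr {M N : Matrix (Fin n) (Fin n) ℝ} (h : Mᴴ * M = Nᴴ * N) :
    singVal M = singVal N := by
  unfold singVal
  rw [eigvals_congr (isHermitian_conjTranspose_mul_self M) (isHermitian_conjTranspose_mul_self N) h]

lemma finrank_span_ortho (u : OrthonormalBasis (Fin n) ℝ (EuclideanSpace ℝ (Fin n)))
    (g : Equiv.Perm (Fin n)) (s : Set (Fin n)) [Fintype s] :
    Module.finrank ℝ (Submodule.span ℝ (⇑u '' (⇑g '' s))) = Fintype.card s := by
  have himg : ⇑u '' (⇑g '' s) = Set.range (fun x : s => u (g x)) := by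
    rw [Set.image_image, Set.image_eq_range]
  rw [himg]
  exact finrank_span_eq_card
    (u.orthonormal.linearIndependent.comp (fun x : s => g x)
      (g.injective.comp Subtype.val_injective))

lemma weyl_le (hn : 0 < n) (S E : Matrix (Fin n) (Fin n) ℝ) (i : Fin n) :
    singVal (S + E) i ≤ singVal S i + singVal E ⟨0, hn⟩ := by
  set hA := isHermitian_conjTranspose_mul_self (S + E) with hAdef
  set hB := isHermitian_conjTranspose_mul_self S with hBdef
  set v := hA.eigenvectorBasis with hv
  set u := hB.eigenvectorBasis with humm
  set τ := Tuple.sort (fun j => -Real.sqrt (hA.eigenvalues j)) with hτ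
  set σ := Tuple.sort (fun j => -Real.sqrt (hB.eigenvalues j)) with hσ
  set W1 := Submodule.span ℝ (⇑v '' (⇑τ '' Set.Iic i)) with hW1def
  set W2 := Submodule.span ℝ (⇑u '' (⇑σ '' Set.Ici i)) with hW2def
  have hW1 : Module.finrank ℝ W1 = i.val + 1 := by
    rw [hW1def, finrank_span_ortho, ← Set.toFinset_card, Set.toFinset_Iic, Fin.card_Iic]
  have hW2 : Module.finrank ℝ W2 = n - i.val := by
    rw [hW2def, finrank_span_ortho, ← Set.toFinset_card, Set.toFinset_Ici, Fin.card_Ici]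
  -- dimension counting
  have hsum := Submodule.finrank_sup_add_finrank_inf_eq W1 W2
  have hle : Module.finrank ℝ ↥(W1 ⊔ W2) ≤ n :=
    le_trans (Submodule.finrank_le _) (by simp)
  have hpos : Module.finrank ℝ ↥(W1 ⊓ W2) ≠ 0 := by
    have hi := i.isLt
    omega
  obtain ⟨x, hx, hx0⟩ := Submodule.exists_mem_ne_zero_of_ne_bot
    (p := W1 ⊓ W2) (fun h => by rw [h] at hpos; simp at hpos)
  obtain ⟨hx1, hx2⟩ := Submodule.mem_inf.mp hx
  have hxn : (0:ℝ) < ‖x‖ := norm_pos_iff.mpr hx0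
  -- lower bound on (S+E) x
  have h1sq : (singVal (S + E) i)^2 * ‖x‖^2 ≤ ‖toE2 ((S + E) *ᵥ x)‖^2 := by
    refine qform_ge _ _ _ fun k hk => ?_
    have hkmem : k ∈ ⇑τ '' Set.Iic i := by
      by_contra h
      exact hk (repr_zero_of_span v hx1 h)
    obtain ⟨j, hj, rfl⟩ := hkmem
    have := singVal_antitone (S + E) hj
    calc (singVal (S + E) i)^2 ≤ (singVal (S + E) j)^2 :=
          pow_le_pow_left₀ (singVal_nonneg _ _) this 2
      _ = hA.eigenvalues (τ j) := sq_singVal (S + E) j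
  -- upper bound on S x
  have h2sq : ‖toE2 (S *ᵥ x)‖^2 ≤ (singVal S i)^2 * ‖x‖^2 := by
    refine qform_le _ _ _ (sq_nonneg _) fun k hk => ?_
    have hkmem : k ∈ ⇑σ '' Set.Ici i := by
      by_contra h
      exact hk (repr_zero_of_span u hx2 h)
    obtain ⟨j, hj, rfl⟩ := hkmem
    have := singVal_antitone S hj
    calc hB.eigenvalues (σ j) = (singVal S j)^2 := (sq_singVal S j).symm
      _ ≤ (singVal S i)^2 := pow_le_pow_left₀ (singVal_nonneg _ _) this 2
  -- upper bound on E x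
  have h3sq : ‖toE2 (E *ᵥ x)‖^2 ≤ (singVal E ⟨0, hn⟩)^2 * ‖x‖^2 := by
    refine qform_le _ _ _ (sq_nonneg _) fun k _ => ?_
    set σE := Tuple.sort (fun j =>
      -Real.sqrt ((isHermitian_conjTranspose_mul_self E).eigenvalues j)) with hσE
    have hk' : k = σE (σE.symm k) := (Equiv.apply_symm_apply σE k).symm
    have hle0 : (⟨0, hn⟩ : Fin n) ≤ σE.symm k := by simp [Fin.le_def]
    have := singVal_antitone E hle0
    calc (isHermitian_conjTranspose_mul_self E).eigenvalues k
        = (isHermitian_conjTranspose_mul_self E).eigenvalues (σE (σE.symm k)) := by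
          rw [Equiv.apply_symm_apply]
      _ = (singVal E (σE.symm k))^2 := (sq_singVal E _).symm
      _ ≤ (singVal E ⟨0, hn⟩)^2 := pow_le_pow_left₀ (singVal_nonneg _ _) this 2
  -- convert to norms
  have h1 : singVal (S + E) i * ‖x‖ ≤ ‖toE2 ((S + E) *ᵥ x)‖ := by
    have := h1sq
    rw [← mul_pow] at this
    exact (pow_le_pow_iff_left₀ (mul_nonneg (singVal_nonneg _ _) (norm_nonneg _)) (norm_nonneg _) two_ne_zero).mp this
  have h2 : ‖toE2 (S *ᵥ x)‖ ≤ singVal S i * ‖x‖ := by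
    have := h2sq
    rw [← mul_pow] at this
    exact (pow_le_pow_iff_left₀ (norm_nonneg _) (mul_nonneg (singVal_nonneg _ _) (norm_nonneg _)) two_ne_zero).mp this
  have h3 : ‖toE2 (E *ᵥ x)‖ ≤ singVal E ⟨0, hn⟩ * ‖x‖ := by
    have := h3sq
    rw [← mul_pow] at this
    exact (pow_le_pow_iff_left₀ (norm_nonneg _) (mul_nonneg (singVal_nonneg _ _) (norm_nonneg _)) two_ne_zero).mp this
  have htri : ‖toE2 ((S + E) *ᵥ x)‖ ≤ ‖toE2 (S *ᵥ x)‖ + ‖toE2 (E *ᵥ x)‖ := by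
    have heq : toE2 ((S + E) *ᵥ x) = toE2 (S *ᵥ x) + toE2 (E *ᵥ x) :=
      congrArg toE2 (add_mulVec S E x)
    rw [heq]
    exact norm_add_le _ _
  have hfin : singVal (S + E) i * ‖x‖ ≤ (singVal S i + singVal E ⟨0, hn⟩) * ‖x‖ := by
    rw [add_mul]; linarith
  exact le_of_mul_le_mul_right hfin hxn

end WeylAux

open WeylAux in
/-- Weyl's inequality for singular values; the spectral norm of
`E` is its largest singular value. -/
theorem weyl_singular_values
    (n : ℕ) (hn : 0 < n) (S E : Matrix (Fin n) (Fin n) ℝ) (i : Fin n) :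
    |singVal (S + E) i - singVal S i| ≤ singVal E ⟨0, hn⟩ := by
  rw [abs_sub_le_iff]
  constructor
  · linarith [weyl_le hn S E i]
  · have h2 := weyl_le hn (S + E) (-E) i
    rw [add_neg_cancel_right] at h2
    have hE : singVal (-E) = singVal E := singVal_congr (by simp)
    rw [hE] at h2
    linarith
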